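/- Let (S(t)) be a C₀-semigroup on H with generator A, and let Q be a bounded self-adjoint nonnegative operator satisfying Hypothesis H. Assume that for every x ∈ dom(A*) one has Qx ∈ dom(A) and AQx = QA*x. Then |Q^{1/2}S(t)*x| ≤ |Q^{1/2}x| for every t ≥ 0 and every x ∈ H. -/

import Mathlib

/-!
STATEMENT 8.  Let (S(t)) be a C₀-semigroup on a separable real Hilbert space H with
generator A, and Q a bounded self-adjoint nonnegative operator (with square root Q^{1/2})
satisfying Hypothesis H.  Assume that for every x ∈ dom(A*) one has Qx ∈ dom(A) and
AQx = QA*x.  Then |Q^{1/2}S(t)*x| ≤ |Q^{1/2}x| for every t ≥ 0 and every x ∈ H.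

The generator is encoded by the predicate `genTo S x y` (x ∈ dom(A) and Ax = y), and the
adjoint of the generator by `adjTo S x z` (x ∈ dom(A*) and A*x = z; since dom(A) is
dense, the formal-adjoint relation determines z uniquely).
-/

open MeasureTheory Filter Set ContinuousLinearMap
open scoped RealInnerProductSpace ENNReal

noncomputable section

variable {H : Type*} [NormedAddCommGroup H] [InnerProductSpace ℝ H] [CompleteSpace H]

/-- `x ∈ dom(A)` and `Ax = y` for the generator `A` of the semigroup `S`. -/
def genTo (S : ℝ → H →L[ℝ] H) (x y : H) : Prop :=
  Filter.Tendsto (fun t : ℝ => t⁻¹ • (S t x - x)) (nhdsWithin 0 (Set.Ioi 0)) (nhds y)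

/-- `x ∈ dom(A*)` and `A*x = z` for the adjoint of the generator of `S`. -/
def adjTo (S : ℝ → H →L[ℝ] H) (x z : H) : Prop :=
  ∀ y y' : H, genTo S y y' → ⟪y', x⟫ = ⟪y, z⟫

set_option linter.unusedSectionVars false

section B
variable {E : Type*} [NormedAddCommGroup E] [NormedSpace ℝ E]

/-- one-sided slope convergence from a derivative -/
theorem slope_right {F : ℝ → E} {c : E} {u : ℝ} (h : HasDerivAt F c u) :
    Tendsto (fun ε : ℝ => ε⁻¹ • (F (u + ε) - F u)) (nhdsWithin 0 (Set.Ioi 0)) (nhds c) := by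
  have h1 : HasDerivWithinAt F c (Set.Ioi u) u := h.hasDerivWithinAt
  rw [hasDerivWithinAt_iff_tendsto_slope' (notMem_Ioi.2 le_rfl)] at h1
  have h2 : Tendsto (fun ε : ℝ => u + ε) (nhdsWithin 0 (Set.Ioi 0))
      (nhdsWithin u (Set.Ioi u)) := by
    apply tendsto_nhdsWithin_of_tendsto_nhds_of_eventually_within
    · have h := (continuous_add_left u).tendsto 0
      rw [add_zero] at h
      exact h.mono_left nhdsWithin_le_nhds
    · filter_upwards [eventually_mem_nhdsWithin] with ε hε
      simpa using (lt_add_iff_pos_right u).2 hε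
  refine (h1.comp h2).congr' ?_
  filter_upwards [] with ε
  simp [slope_def_module]

theorem prim_hasDerivAt {E : Type*} [NormedAddCommGroup E] [NormedSpace ℝ E] [CompleteSpace E]
    {g : ℝ → E} (hg : Continuous g) (u : ℝ) :
    HasDerivAt (fun r : ℝ => ∫ w in (0:ℝ)..r, g w) (g u) u :=
  intervalIntegral.integral_hasDerivAt_right (hg.intervalIntegrable _ _)
    hg.aestronglyMeasurable.stronglyMeasurableAtFilter hg.continuousAt

end B


section Semigroup

variable {S : ℝ → H →L[ℝ] H}

/-- globally continuous version of the orbit map -/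
theorem sg_cont (hScont : ∀ x : H, ContinuousOn (fun t => S t x) (Set.Ici 0)) (m : H) :
    Continuous fun r : ℝ => S (max r 0) m := by
  refine (hScont m).comp_continuous ?_ fun r => Set.mem_Ici.2 (le_max_right _ _)
  exact continuous_id.max continuous_const

theorem sg_bound (hScont : ∀ x : H, ContinuousOn (fun t => S t x) (Set.Ici 0)) (T : ℝ) :
    ∃ M : ℝ, 1 ≤ M ∧ ∀ r : ℝ, 0 ≤ r → r ≤ T → ‖S r‖ ≤ M := by
  have h : ∀ x : H, ∃ C : ℝ, ∀ i : Icc (0:ℝ) (max T 0), ‖S i.1 x‖ ≤ C := by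
    intro x
    obtain ⟨C, hC⟩ := (isCompact_Icc (a := (0:ℝ)) (b := max T 0)).exists_bound_of_continuousOn
      ((hScont x).mono (fun r hr => hr.1))
    exact ⟨C, fun i => hC i.1 i.2⟩
  obtain ⟨C', hC'⟩ := banach_steinhaus (g := fun i : Icc (0:ℝ) (max T 0) => S i.1) h
  refine ⟨max C' 1, le_max_right _ _, fun r hr hrT => ?_⟩
  exact le_trans (hC' ⟨r, hr, le_trans hrT (le_max_left _ _)⟩) (le_max_left _ _)

theorem sg_comm (hSadd : ∀ s t : ℝ, 0 ≤ s → 0 ≤ t → S (s + t) = (S s).comp (S t))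
    {s t : ℝ} (hs : 0 ≤ s) (ht : 0 ≤ t) (m : H) :
    S s (S t m) = S (s + t) m := by
  rw [hSadd s t hs ht]; rfl

/-- shift map on the slope filter -/
theorem tendsto_sub_nhdsWithin (u : ℝ) :
    Tendsto (fun r : ℝ => r - u) (nhdsWithin u (Set.Ioi u)) (nhdsWithin 0 (Set.Ioi 0)) := by
  apply tendsto_nhdsWithin_of_tendsto_nhds_of_eventually_within
  · have h := (continuous_sub_right u).tendsto u
    rw [sub_self] at h
    exact h.mono_left nhdsWithin_le_nhds
  · filter_upwards [eventually_mem_nhdsWithin] with r hr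
    simpa [sub_pos] using hr

theorem tendsto_add_nhdsWithin (u : ℝ) :
    Tendsto (fun ε : ℝ => u + ε) (nhdsWithin 0 (Set.Ioi 0)) (nhdsWithin u (Set.Ioi u)) := by
  apply tendsto_nhdsWithin_of_tendsto_nhds_of_eventually_within
  · have h := (continuous_add_left u).tendsto 0
    rw [add_zero] at h
    exact h.mono_left nhdsWithin_le_nhds
  · filter_upwards [eventually_mem_nhdsWithin] with ε hε
    simpa using (lt_add_iff_pos_right u).2 hε

theorem sg_genTo_shift (hSadd : ∀ s t : ℝ, 0 ≤ s → 0 ≤ t → S (s + t) = (S s).comp (S t))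
    {m m' : H} (hm : genTo S m m') {t : ℝ} (ht : 0 ≤ t) : genTo S (S t m) (S t m') := by
  have h1 : Tendsto (fun δ : ℝ => S t (δ⁻¹ • (S δ m - m))) (nhdsWithin 0 (Set.Ioi 0))
      (nhds (S t m')) := ((S t).continuous.tendsto _).comp hm
  refine h1.congr' ?_
  filter_upwards [eventually_mem_nhdsWithin] with δ (hδ : δ ∈ Set.Ioi (0:ℝ))
  have hδ0 : (0:ℝ) ≤ δ := le_of_lt hδ
  rw [(S t).map_smul, (S t).map_sub, sg_comm hSadd ht hδ0, sg_comm hSadd hδ0 ht, add_comm]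

theorem sg_hasDerivWithinAt (hSadd : ∀ s t : ℝ, 0 ≤ s → 0 ≤ t → S (s + t) = (S s).comp (S t))
    {m m' : H} (hm : genTo S m m') {u : ℝ} (hu : 0 ≤ u) :
    HasDerivWithinAt (fun r : ℝ => S (max r 0) m) (S u m') (Set.Ici u) u := by
  rw [hasDerivWithinAt_iff_tendsto_slope]
  rw [show Set.Ici u \ {u} = Set.Ioi u by rw [Ici_sdiff_left]]
  have h2 : Tendsto (fun δ : ℝ => S u (δ⁻¹ • (S δ m - m))) (nhdsWithin 0 (Set.Ioi 0))
      (nhds (S u m')) := ((S u).continuous.tendsto _).comp hm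
  have h3 := h2.comp (tendsto_sub_nhdsWithin u)
  refine h3.congr' ?_
  filter_upwards [eventually_mem_nhdsWithin] with r (hr : r ∈ Set.Ioi u)
  have hru : 0 < r - u := sub_pos.2 hr
  have h0r : 0 ≤ r := le_trans hu (le_of_lt hr)
  simp only [Function.comp, slope_def_module]
  rw [max_eq_left h0r, max_eq_left hu, (S u).map_smul, (S u).map_sub,
    sg_comm hSadd hu (le_of_lt hru)]
  congr 3
  ring

theorem sg_ftc (hS0 : S 0 = 1)
    (hSadd : ∀ s t : ℝ, 0 ≤ s → 0 ≤ t → S (s + t) = (S s).comp (S t))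
    (hScont : ∀ x : H, ContinuousOn (fun t => S t x) (Set.Ici 0))
    {m m' : H} (hm : genTo S m m') {t : ℝ} (ht : 0 ≤ t) :
    S t m - m = ∫ r in (0:ℝ)..t, S (max r 0) m' := by
  set F : ℝ → H := fun r => S (max r 0) m - ∫ w in (0:ℝ)..r, S (max w 0) m' with hF
  have hcont : ContinuousOn F (Set.Icc 0 t) :=
    ((sg_cont hScont m).sub (continuous_iff_continuousAt.2 fun u =>
      (prim_hasDerivAt (sg_cont hScont m') u).continuousAt)).continuousOn
  have hderiv : ∀ u ∈ Set.Ico 0 t, HasDerivWithinAt F 0 (Set.Ici u) u := by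
    intro u hu
    have h1 := sg_hasDerivWithinAt hSadd hm hu.1
    have h2 := (prim_hasDerivAt (sg_cont hScont m') u).hasDerivWithinAt (s := Set.Ici u)
    have := h1.sub h2
    rw [max_eq_left hu.1, sub_self] at this
    exact this
  have h := constant_of_has_deriv_right_zero hcont hderiv t (by simp [ht])
  rw [hF] at h
  simp only [intervalIntegral.integral_same, sub_zero, max_eq_left ht, max_self, hS0,
    ContinuousLinearMap.one_apply] at h
  linear_combination (norm := abel) h

end Semigroup


section C
variable {S : ℝ → H →L[ℝ] H}

theorem sg_int_genTo (hS0 : S 0 = 1)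
    (hSadd : ∀ s t : ℝ, 0 ≤ s → 0 ≤ t → S (s + t) = (S s).comp (S t))
    (hScont : ∀ x : H, ContinuousOn (fun t => S t x) (Set.Ici 0))
    (m : H) {δ : ℝ} (hδ : 0 ≤ δ) :
    genTo S (∫ w in (0:ℝ)..δ, S (max w 0) m) (S δ m - m) := by
  set F : ℝ → H := fun r => ∫ w in (0:ℝ)..r, S (max w 0) m with hFdef
  have hgc : Continuous fun w : ℝ => S (max w 0) m := sg_cont hScont m
  have hint : ∀ a b : ℝ, IntervalIntegrable (fun w : ℝ => S (max w 0) m) volume a b :=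
    fun a b => hgc.intervalIntegrable a b
  have key : ∀ ε : ℝ, 0 < ε →
      S ε (F δ) - F δ = (F (δ + ε) - F δ) - (F (0 + ε) - F 0) := by
    intro ε hε
    have h1 : S ε (F δ) = ∫ w in (0:ℝ)..δ, S ε (S (max w 0) m) :=
      ((S ε).intervalIntegral_comp_comm (hint 0 δ)).symm
    have h2 : ∫ w in (0:ℝ)..δ, S ε (S (max w 0) m)
        = ∫ w in (0:ℝ)..δ, S (max (w + ε) 0) m := by
      apply intervalIntegral.integral_congr
      intro w hw
      rw [Set.uIcc_of_le hδ] at hw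
      have hw0 : 0 ≤ w := hw.1
      simp only [max_eq_left hw0, max_eq_left (by linarith : (0:ℝ) ≤ w + ε)]
      rw [sg_comm hSadd (le_of_lt hε) hw0, add_comm]
    have h3 : ∫ w in (0:ℝ)..δ, S (max (w + ε) 0) m
        = ∫ w in (0:ℝ)+ε..δ+ε, S (max w 0) m :=
      intervalIntegral.integral_comp_add_right (fun w => S (max w 0) m) ε
    have h4 : ∫ w in (0:ℝ)+ε..δ+ε, S (max w 0) m = F (δ + ε) - F (0 + ε) := by
      rw [hFdef]
      rw [intervalIntegral.integral_interval_sub_left (hint 0 (δ+ε)) (hint 0 (0+ε))]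
    rw [h1, h2, h3, h4]
    simp only [hFdef, intervalIntegral.integral_same, zero_add]
    abel
  have hd : Tendsto (fun ε : ℝ => ε⁻¹ • (F (δ + ε) - F δ) - ε⁻¹ • (F (0 + ε) - F 0))
      (nhdsWithin 0 (Set.Ioi 0)) (nhds (S δ m - m)) := by
    have l1 := slope_right (prim_hasDerivAt hgc δ)
    have l2 := slope_right (prim_hasDerivAt hgc 0)
    have h5 := l1.sub l2
    rw [max_eq_left hδ, max_self, hS0] at h5
    simpa only [ContinuousLinearMap.one_apply] using h5
  refine hd.congr' ?_
  filter_upwards [eventually_mem_nhdsWithin] with ε (hε : ε ∈ Set.Ioi (0:ℝ))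
  rw [key ε hε]
  simp only [smul_sub]

end C

section D
variable {S : ℝ → H →L[ℝ] H}

theorem adjTo_shift (hSadd : ∀ s t : ℝ, 0 ≤ s → 0 ≤ t → S (s + t) = (S s).comp (S t))
    {x z : H} (hx : adjTo S x z) {t : ℝ} (ht : 0 ≤ t) :
    adjTo S (ContinuousLinearMap.adjoint (S t) x) (ContinuousLinearMap.adjoint (S t) z) := by
  intro y y' hy
  rw [ContinuousLinearMap.adjoint_inner_right, ContinuousLinearMap.adjoint_inner_right]
  exact hx (S t y) (S t y') (sg_genTo_shift hSadd hy ht)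

theorem adjTo_weak_deriv (hS0 : S 0 = 1)
    (hSadd : ∀ s t : ℝ, 0 ≤ s → 0 ≤ t → S (s + t) = (S s).comp (S t))
    (hScont : ∀ x : H, ContinuousOn (fun t => S t x) (Set.Ici 0))
    {x z : H} (hx : adjTo S x z) (m : H) :
    Tendsto (fun δ : ℝ => δ⁻¹ * (⟪x, S δ m⟫ - ⟪x, m⟫)) (nhdsWithin 0 (Set.Ioi 0))
      (nhds ⟪z, m⟫) := by
  set G : ℝ → ℝ := fun r => ∫ w in (0:ℝ)..r, ⟪z, S (max w 0) m⟫ with hG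
  have hgc : Continuous fun w : ℝ => (⟪z, S (max w 0) m⟫ : ℝ) :=
    continuous_const.inner (sg_cont hScont m)
  have hd := slope_right (prim_hasDerivAt hgc 0)
  rw [max_self, hS0] at hd
  simp only [ContinuousLinearMap.one_apply, zero_add, smul_eq_mul] at hd
  refine hd.congr' ?_
  filter_upwards [eventually_mem_nhdsWithin] with δ (hδ : δ ∈ Set.Ioi (0:ℝ))
  have hgen := sg_int_genTo hS0 hSadd hScont m (le_of_lt hδ)
  have h1 := hx _ _ hgen
  have h2 : (⟪∫ w in (0:ℝ)..δ, S (max w 0) m, z⟫ : ℝ)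
      = ∫ w in (0:ℝ)..δ, ⟪z, S (max w 0) m⟫ := by
    rw [real_inner_comm]
    exact ((innerSL ℝ z).intervalIntegral_comp_comm
      ((sg_cont hScont m).intervalIntegrable 0 δ)).symm
  rw [intervalIntegral.integral_same, sub_zero, ← h2, ← h1, inner_sub_left,
    real_inner_comm ((S δ) m) x, real_inner_comm m x]

theorem scalar_ftc (hS0 : S 0 = 1)
    (hSadd : ∀ s t : ℝ, 0 ≤ s → 0 ≤ t → S (s + t) = (S s).comp (S t))
    (hScont : ∀ x : H, ContinuousOn (fun t => S t x) (Set.Ici 0))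
    {x z : H} (hx : adjTo S x z) (v : H) {t : ℝ} (ht : 0 ≤ t) :
    ⟪x, S t v⟫ - ⟪x, v⟫ = ∫ w in (0:ℝ)..t, ⟪z, S (max w 0) v⟫ := by
  set F : ℝ → ℝ := fun r => ⟪x, S (max r 0) v⟫ - ∫ w in (0:ℝ)..r, ⟪z, S (max w 0) v⟫ with hF
  have hgc : Continuous fun w : ℝ => (⟪z, S (max w 0) v⟫ : ℝ) :=
    continuous_const.inner (sg_cont hScont v)
  have hcont : ContinuousOn F (Set.Icc 0 t) := by
    apply Continuous.continuousOn
    exact (continuous_const.inner (sg_cont hScont v)).sub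
      (continuous_iff_continuousAt.2 fun u => (prim_hasDerivAt hgc u).continuousAt)
  have hderiv : ∀ u ∈ Set.Ico 0 t, HasDerivWithinAt F 0 (Set.Ici u) u := by
    intro u hu
    have h2 := ((prim_hasDerivAt hgc u).hasDerivWithinAt (s := Set.Ici u))
    have h1 : HasDerivWithinAt (fun r : ℝ => (⟪x, S (max r 0) v⟫ : ℝ))
        (⟪z, S (max u 0) v⟫) (Set.Ici u) u := by
      rw [hasDerivWithinAt_iff_tendsto_slope]
      rw [show Set.Ici u \ {u} = Set.Ioi u by rw [Ici_sdiff_left]]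
      have hwd := adjTo_weak_deriv hS0 hSadd hScont hx (S u v)
      have h2' : Tendsto (fun ε : ℝ => u + ε) (nhdsWithin 0 (Set.Ioi 0))
          (nhdsWithin u (Set.Ioi u)) := by
        apply tendsto_nhdsWithin_of_tendsto_nhds_of_eventually_within
        · have h := (continuous_add_left u).tendsto 0
          rw [add_zero] at h
          exact h.mono_left nhdsWithin_le_nhds
        · filter_upwards [eventually_mem_nhdsWithin] with ε hε
          simpa using (lt_add_iff_pos_right u).2 hε
      have h2'' : Tendsto (fun r : ℝ => r - u) (nhdsWithin u (Set.Ioi u))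
          (nhdsWithin 0 (Set.Ioi 0)) := by
        apply tendsto_nhdsWithin_of_tendsto_nhds_of_eventually_within
        · have h := (continuous_sub_right u).tendsto u
          rw [sub_self] at h
          exact h.mono_left nhdsWithin_le_nhds
        · filter_upwards [eventually_mem_nhdsWithin] with r hr
          simpa [sub_pos] using hr
      have h3 := hwd.comp h2''
      rw [max_eq_left hu.1]
      refine h3.congr' ?_
      filter_upwards [eventually_mem_nhdsWithin] with r (hr : r ∈ Set.Ioi u)
      have hru : 0 < r - u := sub_pos.2 hr
      have h0r : 0 ≤ r := le_trans hu.1 (le_of_lt hr)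
      simp only [Function.comp, slope_def_module, smul_eq_mul]
      rw [max_eq_left h0r, max_eq_left hu.1]
      rw [show S r v = S (r - u) (S u v) by
        rw [sg_comm hSadd (le_of_lt hru) hu.1]; congr 1; ring]
  -- combine
    have := h1.sub h2
    rw [sub_self] at this
    exact this
  have h := constant_of_has_deriv_right_zero hcont hderiv t (by simp [ht])
  rw [hF] at h
  simp only [intervalIntegral.integral_same, sub_zero, max_eq_left ht, max_self, hS0,
    ContinuousLinearMap.one_apply] at h
  linarith [h]

end D

section E
variable {S : ℝ → H →L[ℝ] H}

theorem adj_strong (hS0 : S 0 = 1)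
    (hSadd : ∀ s t : ℝ, 0 ≤ s → 0 ≤ t → S (s + t) = (S s).comp (S t))
    (hScont : ∀ x : H, ContinuousOn (fun t => S t x) (Set.Ici 0))
    {x z : H} (hx : adjTo S x z) {M : ℝ} (hM : 1 ≤ M) {T : ℝ}
    (hMb : ∀ r : ℝ, 0 ≤ r → r ≤ T → ‖S r‖ ≤ M)
    {r : ℝ} (hr : 0 ≤ r) (hrT : r ≤ T) :
    ‖ContinuousLinearMap.adjoint (S r) x - x‖ ≤ r * (M * ‖z‖) := by
  set u : H := ContinuousLinearMap.adjoint (S r) x - x with hu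
  have key : ‖u‖ ^ 2 = ⟪x, S r u⟫ - ⟪x, u⟫ := by
    rw [← real_inner_self_eq_norm_sq]
    have : (⟪u, u⟫ : ℝ) = ⟪ContinuousLinearMap.adjoint (S r) x, u⟫ - ⟪x, u⟫ := by
      rw [hu, inner_sub_left]
    rw [this, ContinuousLinearMap.adjoint_inner_left]
  have hb : ∀ w ∈ Set.uIoc (0:ℝ) r, ‖(⟪z, S (max w 0) u⟫ : ℝ)‖ ≤ M * ‖z‖ * ‖u‖ := by
    intro w hw
    rw [Set.uIoc_of_le hr] at hw
    have h1 : |(⟪z, S (max w 0) u⟫ : ℝ)| ≤ ‖z‖ * ‖S (max w 0) u‖ := abs_real_inner_le_norm _ _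
    have h2 : ‖S (max w 0) u‖ ≤ M * ‖u‖ := by
      refine le_trans ((S (max w 0)).le_opNorm u) ?_
      have := hMb (max w 0) (le_max_right _ _) (by
        rw [max_eq_left (le_of_lt hw.1)]; exact le_trans hw.2 hrT)
      exact mul_le_mul_of_nonneg_right this (norm_nonneg u)
    calc ‖(⟪z, S (max w 0) u⟫ : ℝ)‖ ≤ ‖z‖ * (M * ‖u‖) :=
          le_trans h1 (mul_le_mul_of_nonneg_left h2 (norm_nonneg z))
      _ = M * ‖z‖ * ‖u‖ := by ring
  have hi : ‖u‖ ^ 2 ≤ M * ‖z‖ * ‖u‖ * |r - 0| := by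
    rw [key, scalar_ftc hS0 hSadd hScont hx u hr]
    exact le_trans (le_abs_self _) (intervalIntegral.norm_integral_le_of_norm_le_const hb)
  rw [abs_of_nonneg (by linarith), sub_zero] at hi
  rcases eq_or_lt_of_le (norm_nonneg u) with h0 | h0
  · rw [← h0]
    positivity
  · nlinarith [norm_nonneg z, norm_nonneg u]

end E

section F
variable {S : ℝ → H →L[ℝ] H}

theorem norm_adj (A : H →L[ℝ] H) : ‖ContinuousLinearMap.adjoint A‖ = ‖A‖ :=
  LinearIsometryEquiv.norm_map ContinuousLinearMap.adjoint A


theorem inner_intervalIntegral {a b : ℝ} (c : H) {f : ℝ → H}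
    (hf : IntervalIntegrable f volume a b) :
    (⟪c, ∫ x in a..b, f x⟫ : ℝ) = ∫ x in a..b, ⟪c, f x⟫ := by
  have h := (innerSL ℝ c).intervalIntegral_comp_comm hf
  exact h.symm

set_option maxHeartbeats 2000000 in
theorem sym_dom (hS0 : S 0 = 1)
    (hSadd : ∀ s t : ℝ, 0 ≤ s → 0 ≤ t → S (s + t) = (S s).comp (S t))
    (hScont : ∀ x : H, ContinuousOn (fun t => S t x) (Set.Ici 0))
    {Q : H →L[ℝ] H} (hQsa : IsSelfAdjoint Q)
    (hAQ : ∀ x z : H, adjTo S x z → genTo S (Q x) (Q z))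
    {a a' b b' : H} (ha : adjTo S a a') (hb : adjTo S b b')
    {t : ℝ} (ht : 0 ≤ t) :
    ⟪S t (Q a), b⟫ = ⟪a, S t (Q b)⟫ := by
  have hQsym : ∀ u v : H, (⟪Q u, v⟫ : ℝ) = ⟪u, Q v⟫ := by
    intro u v
    conv_lhs => rw [← ContinuousLinearMap.isSelfAdjoint_iff'.mp hQsa]
    rw [ContinuousLinearMap.adjoint_inner_left]
  rcases eq_or_lt_of_le ht with rfl | htpos
  · rw [hS0]
    simpa using hQsym a b
  obtain ⟨M, hM1, hMb⟩ := sg_bound hScont t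
  have hMpos : 0 < M := lt_of_lt_of_le one_pos hM1
  set adj : ℝ → H →L[ℝ] H := fun τ => ContinuousLinearMap.adjoint (S τ) with hadj
  set h : ℝ → ℝ := fun σ => ⟪Q (adj (t - σ) a), adj σ b⟫ with hh
  have hadj0 : adj 0 = ContinuousLinearMap.id ℝ H := by
    rw [hadj]
    simp only [hS0, ContinuousLinearMap.one_def, ContinuousLinearMap.adjoint_id]
  have hSle : ∀ r : ℝ, 0 ≤ r → r ≤ t → ∀ v : H, ‖S r v‖ ≤ M * ‖v‖ := by
    intro r hr hrt v
    exact le_trans ((S r).le_opNorm v)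
      (mul_le_mul_of_nonneg_right (hMb r hr hrt) (norm_nonneg v))
  have hadjle : ∀ r : ℝ, 0 ≤ r → r ≤ t → ∀ v : H, ‖adj r v‖ ≤ M * ‖v‖ := by
    intro r hr hrt v
    refine le_trans ((adj r).le_opNorm v) ?_
    rw [hadj]
    simp only []
    rw [norm_adj]
    exact mul_le_mul_of_nonneg_right (hMb r hr hrt) (norm_nonneg v)
  -- difference formula
  have hdec : ∀ s ε : ℝ, 0 ≤ s → 0 < ε → s + ε ≤ t →
      h (s + ε) - h s = ∫ r in (0:ℝ)..ε,
        ((⟪S (max r 0) (Q (adj (t - s - ε) a')), adj s b⟫ : ℝ)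
          - ⟪adj (t - s - ε) a, S (max r 0) (Q (adj s b'))⟫) := by
    intro s ε hs hε hsε
    have hu : (0:ℝ) ≤ t - s - ε := by linarith
    have hεnn : (0:ℝ) ≤ ε := le_of_lt hε
    set u : ℝ := t - s - ε with hudef
    set aε : H := adj u a with haε
    set zε : H := adj u a' with hzε
    set c0 : H := adj s b with hc0
    set c0' : H := adj s b' with hc0'
    have hQaε : genTo S (Q aε) (Q zε) := hAQ _ _ (adjTo_shift hSadd ha hu)
    have hQc0 : genTo S (Q c0) (Q c0') := hAQ _ _ (adjTo_shift hSadd hb hs)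
    have e1 : adj (t - s) a = ContinuousLinearMap.adjoint (S ε) aε := by
      rw [haε, hadj]
      simp only []
      rw [show t - s = u + ε by rw [hudef]; ring, hSadd u ε hu hεnn,
        ContinuousLinearMap.adjoint_comp]
      rfl
    have e2 : adj (s + ε) b = ContinuousLinearMap.adjoint (S ε) c0 := by
      rw [hc0, hadj]
      simp only []
      rw [hSadd s ε hs hεnn, ContinuousLinearMap.adjoint_comp]
      rfl
    have lhs1 : h (s + ε) = ⟪S ε (Q aε), c0⟫ := by
      rw [hh]
      simp only []
      rw [show t - (s + ε) = u by rw [hudef]; ring, e2,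
        ContinuousLinearMap.adjoint_inner_right]
    have lhs2 : h s = ⟪Q (ContinuousLinearMap.adjoint (S ε) aε), c0⟫ := by
      rw [hh]
      simp only []
      rw [e1]
    have T1 : (⟪S ε (Q aε) - Q aε, c0⟫ : ℝ)
        = ∫ r in (0:ℝ)..ε, ⟪S (max r 0) (Q zε), c0⟫ := by
      rw [sg_ftc hS0 hSadd hScont hQaε hεnn, real_inner_comm,
        inner_intervalIntegral c0 ((sg_cont hScont (Q zε)).intervalIntegrable 0 ε)]
      apply intervalIntegral.integral_congr
      intro w _
      exact real_inner_comm _ _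
    have T2 : (⟪Q (ContinuousLinearMap.adjoint (S ε) aε) - Q aε, c0⟫ : ℝ)
        = ∫ r in (0:ℝ)..ε, ⟪aε, S (max r 0) (Q c0')⟫ := by
      rw [inner_sub_left, hQsym, hQsym, ContinuousLinearMap.adjoint_inner_left,
        ← inner_sub_right]
      rw [show S ε (Q c0) - Q c0 = ∫ r in (0:ℝ)..ε, S (max r 0) (Q c0') from
        sg_ftc hS0 hSadd hScont hQc0 hεnn]
      exact inner_intervalIntegral aε ((sg_cont hScont (Q c0')).intervalIntegrable 0 ε)
    have comb : h (s + ε) - h s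
        = (⟪S ε (Q aε) - Q aε, c0⟫ : ℝ)
          - ⟪Q (ContinuousLinearMap.adjoint (S ε) aε) - Q aε, c0⟫ := by
      rw [lhs1, lhs2, inner_sub_left, inner_sub_left]
      ring
    rw [comb, T1, T2, ← intervalIntegral.integral_sub
      (((sg_cont hScont (Q zε)).inner continuous_const).intervalIntegrable 0 ε)
      ((continuous_const.inner (sg_cont hScont (Q c0'))).intervalIntegrable 0 ε)]
  -- Lipschitz bound
  set C : ℝ := M * (‖Q‖ * (M * ‖a'‖)) * (M * ‖b‖) + M * ‖a‖ * (M * (‖Q‖ * (M * ‖b'‖)))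
    with hCdef
  have hC0 : 0 ≤ C := by positivity
  have hlip : ∀ s ε : ℝ, 0 ≤ s → 0 < ε → s + ε ≤ t → |h (s + ε) - h s| ≤ C * ε := by
    intro s ε hs hε hsε
    rw [hdec s ε hs hε hsε]
    have hu : (0:ℝ) ≤ t - s - ε := by linarith
    have hut : t - s - ε ≤ t := by linarith
    have hst : s ≤ t := by linarith
    have hbnd : ∀ r ∈ Set.uIoc (0:ℝ) ε,
        ‖(⟪S (max r 0) (Q (adj (t - s - ε) a')), adj s b⟫ : ℝ)
          - ⟪adj (t - s - ε) a, S (max r 0) (Q (adj s b'))⟫‖ ≤ C := by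
      intro r hr
      rw [Set.uIoc_of_le (le_of_lt hε)] at hr
      have hr0 : (0:ℝ) ≤ max r 0 := le_max_right _ _
      have hrt : max r 0 ≤ t := by
        rw [max_eq_left (le_of_lt hr.1)]
        linarith [hr.2]
      have i1 : |(⟪S (max r 0) (Q (adj (t - s - ε) a')), adj s b⟫ : ℝ)|
          ≤ M * (‖Q‖ * (M * ‖a'‖)) * (M * ‖b‖) := by
        refine le_trans (abs_real_inner_le_norm _ _) (mul_le_mul ?_ ?_ (norm_nonneg _) ?_)
        · refine le_trans (hSle _ hr0 hrt _) (mul_le_mul_of_nonneg_left ?_ (le_of_lt hMpos))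
          refine le_trans (Q.le_opNorm _)
            (mul_le_mul_of_nonneg_left (hadjle _ hu hut a') (norm_nonneg Q))
        · exact hadjle s hs hst b
        · positivity
      have i2 : |(⟪adj (t - s - ε) a, S (max r 0) (Q (adj s b'))⟫ : ℝ)|
          ≤ M * ‖a‖ * (M * (‖Q‖ * (M * ‖b'‖))) := by
        refine le_trans (abs_real_inner_le_norm _ _) (mul_le_mul ?_ ?_ (norm_nonneg _) ?_)
        · exact hadjle _ hu hut a
        · refine le_trans (hSle _ hr0 hrt _) (mul_le_mul_of_nonneg_left ?_ (le_of_lt hMpos))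
          refine le_trans (Q.le_opNorm _)
            (mul_le_mul_of_nonneg_left (hadjle s hs hst b') (norm_nonneg Q))
        · positivity
      rw [hCdef, Real.norm_eq_abs]
      calc |(⟪S (max r 0) (Q (adj (t - s - ε) a')), adj s b⟫ : ℝ)
          - ⟪adj (t - s - ε) a, S (max r 0) (Q (adj s b'))⟫|
          ≤ |(⟪S (max r 0) (Q (adj (t - s - ε) a')), adj s b⟫ : ℝ)|
            + |(⟪adj (t - s - ε) a, S (max r 0) (Q (adj s b'))⟫ : ℝ)| := abs_sub _ _
        _ ≤ _ := add_le_add i1 i2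
    have := intervalIntegral.norm_integral_le_of_norm_le_const hbnd
    rw [Real.norm_eq_abs] at this
    calc |∫ r in (0:ℝ)..ε, ((⟪S (max r 0) (Q (adj (t - s - ε) a')), adj s b⟫ : ℝ)
          - ⟪adj (t - s - ε) a, S (max r 0) (Q (adj s b'))⟫)| ≤ C * |ε - 0| := this
      _ = C * ε := by rw [sub_zero, abs_of_pos hε]
  have hhcont : ContinuousOn h (Set.Icc 0 t) := by
    refine LipschitzOnWith.continuousOn (K := Real.toNNReal C)
      (LipschitzOnWith.of_dist_le_mul ?_)
    have key : ∀ x ∈ Set.Icc 0 t, ∀ y ∈ Set.Icc 0 t, x ≤ y →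
        dist (h x) (h y) ≤ Real.toNNReal C * dist x y := by
      intro x hx y hy hxy
      rcases eq_or_lt_of_le hxy with rfl | hlt
      · simp
      · have hε : 0 < y - x := by linarith
        have hb2 := hlip x (y - x) hx.1 hε (by linarith [hy.2])
        rw [add_sub_cancel] at hb2
        rw [Real.dist_eq, Real.dist_eq, Real.coe_toNNReal C hC0]
        calc |h x - h y| = |h y - h x| := abs_sub_comm _ _
          _ ≤ C * (y - x) := hb2
          _ = C * |x - y| := by rw [abs_sub_comm, abs_of_pos hε]

    intro x hx y hy
    rcases le_total x y with hxy | hxy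
    · exact key x hx y hy hxy
    · rw [dist_comm (h x) (h y), dist_comm x y]
      exact key y hy x hx hxy
  -- h has vanishing right derivative
  have hderiv : ∀ s ∈ Set.Ico 0 t, HasDerivWithinAt h 0 (Set.Ici s) s := by
    intro s hs
    have hts : (0:ℝ) < t - s := by linarith [hs.2]
    set c0 : H := adj s b with hc0
    set c0' : H := adj s b' with hc0'
    have hadjc0 : adjTo S c0 c0' := adjTo_shift hSadd hb hs.1
    have hQc0 : genTo S (Q c0) (Q c0') := hAQ _ _ hadjc0
    have target0 : (⟪a', S (t - s) (Q c0)⟫ : ℝ) = ⟪a, S (t - s) (Q c0')⟫ := by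
      have hpair := (adjTo_shift hSadd ha (le_of_lt hts)) (Q c0) (Q c0') hQc0
      calc (⟪a', S (t - s) (Q c0)⟫ : ℝ)
          = ⟪ContinuousLinearMap.adjoint (S (t - s)) a', Q c0⟫ :=
            (ContinuousLinearMap.adjoint_inner_left _ _ _).symm
        _ = ⟪Q c0, ContinuousLinearMap.adjoint (S (t - s)) a'⟫ := real_inner_comm _ _
        _ = ⟪Q c0', ContinuousLinearMap.adjoint (S (t - s)) a⟫ := hpair.symm
        _ = ⟪ContinuousLinearMap.adjoint (S (t - s)) a, Q c0'⟫ := real_inner_comm _ _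
        _ = ⟪a, S (t - s) (Q c0')⟫ := ContinuousLinearMap.adjoint_inner_left _ _ _
    set φ1 : ℝ → ℝ := fun ε' => ⟪a', S (max (t - s - ε') 0) (Q c0)⟫ with hφ1
    set φ2 : ℝ → ℝ := fun ε' => ⟪a, S (max (t - s - ε') 0) (Q c0')⟫ with hφ2
    set ψ : ℝ → ℝ := fun ρ => ‖S (max ρ 0) (Q c0') - Q c0'‖ with hψ
    have hφ1c : ContinuousAt φ1 0 := by
      apply Continuous.continuousAt
      exact continuous_const.inner
        ((sg_cont hScont (Q c0)).comp (continuous_const.sub continuous_id))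
    have hφ2c : ContinuousAt φ2 0 := by
      apply Continuous.continuousAt
      exact continuous_const.inner
        ((sg_cont hScont (Q c0')).comp (continuous_const.sub continuous_id))
    have hψc : ContinuousAt ψ 0 := by
      apply Continuous.continuousAt
      exact ((sg_cont hScont (Q c0')).sub continuous_const).norm
    have hψ0 : ψ 0 = 0 := by
      rw [hψ]
      simp [hS0]
    have hφ10 : φ1 0 = ⟪a', S (t - s) (Q c0)⟫ := by
      rw [hφ1]
      simp only [sub_zero]
      rw [max_eq_left (le_of_lt hts)]
    have hφ20 : φ2 0 = ⟪a, S (t - s) (Q c0')⟫ := by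
      rw [hφ2]
      simp only [sub_zero]
      rw [max_eq_left (le_of_lt hts)]
    set K1 : ℝ := ‖a'‖ * (M * (‖Q‖ * (M * ‖c0'‖))) with hK1
    have hK1nn : 0 ≤ K1 := by positivity
    have T0 : Tendsto (fun ε : ℝ => ε⁻¹ * (h (s + ε) - h s)) (nhdsWithin 0 (Set.Ioi 0))
        (nhds 0) := by
      rw [NormedAddCommGroup.tendsto_nhds_zero]
      intro η hη
      set η' : ℝ := η / (4 * (M * ‖a‖ + 1)) with hη'
      have hη'pos : 0 < η' := by positivity
      have ev1 : ∀ᶠ ε in nhdsWithin (0:ℝ) (Set.Ioi 0), ε ∈ Set.Ioo 0 (t - s) :=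
        Ioo_mem_nhdsGT_of_mem ⟨le_rfl, hts⟩
      have ev2 : ∀ᶠ ε in nhdsWithin (0:ℝ) (Set.Ioi 0), K1 * ε < η / 4 := by
        have htd : Tendsto (fun ε : ℝ => K1 * ε) (nhdsWithin 0 (Set.Ioi 0)) (nhds 0) := by
          have hcm : Tendsto (fun ε : ℝ => K1 * ε) (nhds 0) (nhds (K1 * 0)) :=
            (continuous_const.mul continuous_id).tendsto 0
          rw [mul_zero] at hcm
          exact hcm.mono_left nhdsWithin_le_nhds
        exact htd.eventually_lt_const (by positivity : (0:ℝ) < η / 4)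
      have ev3 : ∀ᶠ ε in nhdsWithin (0:ℝ) (Set.Ioi 0), |φ1 ε - φ1 0| < η / 4 := by
        have := Metric.tendsto_nhds.mp hφ1c (η / 4) (by positivity)
        filter_upwards [this.filter_mono nhdsWithin_le_nhds] with ε hε
        rwa [Real.dist_eq] at hε
      have ev4 : ∀ᶠ ε in nhdsWithin (0:ℝ) (Set.Ioi 0), |φ2 ε - φ2 0| < η / 4 := by
        have := Metric.tendsto_nhds.mp hφ2c (η / 4) (by positivity)
        filter_upwards [this.filter_mono nhdsWithin_le_nhds] with ε hε
        rwa [Real.dist_eq] at hε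
      have ev5 : ∀ᶠ ε in nhdsWithin (0:ℝ) (Set.Ioi 0), ∀ r : ℝ, 0 < r → r ≤ ε → ψ r < η' := by
        obtain ⟨δ₀, hδ₀pos, hδ₀⟩ := Metric.continuousAt_iff.mp hψc η' hη'pos
        have : ∀ᶠ ε in nhdsWithin (0:ℝ) (Set.Ioi 0), ε ∈ Set.Ioo 0 δ₀ :=
          Ioo_mem_nhdsGT_of_mem ⟨le_rfl, hδ₀pos⟩
        filter_upwards [this] with ε hε r hr hrε
        have : dist r 0 < δ₀ := by
          rw [Real.dist_eq, sub_zero, abs_of_pos hr]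
          linarith [hε.2]
        have := hδ₀ this
        rw [Real.dist_eq, hψ0, sub_zero] at this
        calc ψ r ≤ |ψ r| := le_abs_self _
          _ < η' := this
      filter_upwards [ev1, ev2, ev3, ev4, ev5] with ε hε1 hε2 hε3 hε4 hε5
      have hε0 : 0 < ε := hε1.1
      have hεts : ε < t - s := hε1.2
      have hu0 : (0:ℝ) ≤ t - s - ε := by linarith
      have hut : t - s - ε ≤ t := by linarith [hs.1]
      rw [hdec s ε hs.1 hε0 (by linarith)]
      set B : ℝ := K1 * ε + M * ‖a‖ * η' + |φ1 ε - φ1 0| + |φ2 ε - φ2 0| with hB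
      have hptb : ∀ r ∈ Set.uIoc (0:ℝ) ε,
          ‖(⟪S (max r 0) (Q (adj (t - s - ε) a')), adj s b⟫ : ℝ)
            - ⟪adj (t - s - ε) a, S (max r 0) (Q (adj s b'))⟫‖ ≤ B := by
        intro r hr
        rw [Set.uIoc_of_le (le_of_lt hε0)] at hr
        have hrmax : max r 0 = r := max_eq_left (le_of_lt hr.1)
        have hrt : r ≤ t := by linarith [hr.2, hεts, hs.1]
        -- rewrite g1
        have e3 : (⟪S (max r 0) (Q (adj (t - s - ε) a')), adj s b⟫ : ℝ)
            = ⟪a', S (t - s - ε)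
                (Q (ContinuousLinearMap.adjoint (S (max r 0)) c0))⟫ := by
          rw [← ContinuousLinearMap.adjoint_inner_right, hQsym, hadj]
          simp only []
          rw [ContinuousLinearMap.adjoint_inner_left]
        have e4 : (⟪adj (t - s - ε) a, S (max r 0) (Q (adj s b'))⟫ : ℝ)
            = ⟪a, S (t - s - ε) (S (max r 0) (Q c0'))⟫ := by
          rw [hadj]
          simp only []
          rw [ContinuousLinearMap.adjoint_inner_left]
        have split1 : (⟪a', S (t - s - ε)
              (Q (ContinuousLinearMap.adjoint (S (max r 0)) c0))⟫ : ℝ)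
            = ⟪a', S (t - s - ε)
                (Q (ContinuousLinearMap.adjoint (S (max r 0)) c0 - c0))⟫ + φ1 ε := by
          rw [hφ1]
          simp only []
          rw [max_eq_left hu0, ← inner_add_right, ← (S (t - s - ε)).map_add, ← Q.map_add]
          congr 3
          abel
        have split2 : (⟪a, S (t - s - ε) (S (max r 0) (Q c0'))⟫ : ℝ)
            = ⟪a, S (t - s - ε) (S (max r 0) (Q c0') - Q c0')⟫ + φ2 ε := by
          rw [hφ2]
          simp only []
          rw [max_eq_left hu0, ← inner_add_right, ← (S (t - s - ε)).map_add]
          congr 2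
          abel
        have bd1 : |(⟪a', S (t - s - ε)
              (Q (ContinuousLinearMap.adjoint (S (max r 0)) c0 - c0))⟫ : ℝ)| ≤ K1 * ε := by
          have hw : ‖ContinuousLinearMap.adjoint (S (max r 0)) c0 - c0‖ ≤ ε * (M * ‖c0'‖) := by
            refine le_trans (adj_strong hS0 hSadd hScont hadjc0 hM1 hMb (le_max_right r 0)
              (by rw [hrmax]; exact hrt)) ?_
            rw [hrmax]
            exact mul_le_mul_of_nonneg_right hr.2 (by positivity)
          calc |(⟪a', S (t - s - ε)
                (Q (ContinuousLinearMap.adjoint (S (max r 0)) c0 - c0))⟫ : ℝ)|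
              ≤ ‖a'‖ * ‖S (t - s - ε)
                (Q (ContinuousLinearMap.adjoint (S (max r 0)) c0 - c0))‖ :=
                abs_real_inner_le_norm _ _
            _ ≤ ‖a'‖ * (M * (‖Q‖ * (ε * (M * ‖c0'‖)))) := by
                refine mul_le_mul_of_nonneg_left ?_ (norm_nonneg a')
                refine le_trans (hSle _ hu0 hut _) (mul_le_mul_of_nonneg_left ?_
                  (le_of_lt hMpos))
                exact le_trans (Q.le_opNorm _)
                  (mul_le_mul_of_nonneg_left hw (norm_nonneg Q))
            _ = K1 * ε := by rw [hK1]; ring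
        have bd2 : |(⟪a, S (t - s - ε) (S (max r 0) (Q c0') - Q c0')⟫ : ℝ)|
            ≤ M * ‖a‖ * η' := by
          have hψr : ‖S (max r 0) (Q c0') - Q c0'‖ < η' := hε5 r hr.1 hr.2
          calc |(⟪a, S (t - s - ε) (S (max r 0) (Q c0') - Q c0')⟫ : ℝ)|
              ≤ ‖a‖ * ‖S (t - s - ε) (S (max r 0) (Q c0') - Q c0')‖ :=
                abs_real_inner_le_norm _ _
            _ ≤ ‖a‖ * (M * ‖S (max r 0) (Q c0') - Q c0'‖) := by
                exact mul_le_mul_of_nonneg_left (hSle _ hu0 hut _) (norm_nonneg a)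
            _ ≤ ‖a‖ * (M * η') := by
                refine mul_le_mul_of_nonneg_left ?_ (norm_nonneg a)
                exact mul_le_mul_of_nonneg_left (le_of_lt hψr) (le_of_lt hMpos)
            _ = M * ‖a‖ * η' := by ring
        rw [Real.norm_eq_abs, e3, e4, split1, split2]
        have hid : (⟪a', S (t - s - ε)
              (Q (ContinuousLinearMap.adjoint (S (max r 0)) c0 - c0))⟫ : ℝ) + φ1 ε
            - ((⟪a, S (t - s - ε) (S (max r 0) (Q c0') - Q c0')⟫ : ℝ) + φ2 ε)
            = ⟪a', S (t - s - ε)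
              (Q (ContinuousLinearMap.adjoint (S (max r 0)) c0 - c0))⟫
              - ⟪a, S (t - s - ε) (S (max r 0) (Q c0') - Q c0')⟫
              + (φ1 ε - φ1 0) - (φ2 ε - φ2 0) := by
          rw [hφ10, hφ20, target0]
          ring
        rw [hid, hB]
        have := abs_sub (φ1 ε - φ1 0) (φ2 ε - φ2 0)
        calc |(⟪a', S (t - s - ε)
              (Q (ContinuousLinearMap.adjoint (S (max r 0)) c0 - c0))⟫ : ℝ)
              - ⟪a, S (t - s - ε) (S (max r 0) (Q c0') - Q c0')⟫
              + (φ1 ε - φ1 0) - (φ2 ε - φ2 0)|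
            ≤ |(⟪a', S (t - s - ε)
              (Q (ContinuousLinearMap.adjoint (S (max r 0)) c0 - c0))⟫ : ℝ)|
              + |(⟪a, S (t - s - ε) (S (max r 0) (Q c0') - Q c0')⟫ : ℝ)|
              + |φ1 ε - φ1 0| + |φ2 ε - φ2 0| := by
              have h1 := abs_add_le (⟪a', S (t - s - ε)
                (Q (ContinuousLinearMap.adjoint (S (max r 0)) c0 - c0))⟫
                - ⟪a, S (t - s - ε) (S (max r 0) (Q c0') - Q c0')⟫ + (φ1 ε - φ1 0))
                (-(φ2 ε - φ2 0))
              have h2 := abs_add_le ((⟪a', S (t - s - ε)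
                (Q (ContinuousLinearMap.adjoint (S (max r 0)) c0 - c0))⟫ : ℝ)
                - ⟪a, S (t - s - ε) (S (max r 0) (Q c0') - Q c0')⟫) (φ1 ε - φ1 0)
              have h3 := abs_sub (⟪a', S (t - s - ε)
                (Q (ContinuousLinearMap.adjoint (S (max r 0)) c0 - c0))⟫ : ℝ)
                (⟪a, S (t - s - ε) (S (max r 0) (Q c0') - Q c0')⟫ : ℝ)
              rw [abs_neg] at h1
              have h4 : |(⟪a', S (t - s - ε)
                (Q (ContinuousLinearMap.adjoint (S (max r 0)) c0 - c0))⟫ : ℝ)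
                - ⟪a, S (t - s - ε) (S (max r 0) (Q c0') - Q c0')⟫
                + (φ1 ε - φ1 0) - (φ2 ε - φ2 0)|
                ≤ |(⟪a', S (t - s - ε)
                (Q (ContinuousLinearMap.adjoint (S (max r 0)) c0 - c0))⟫ : ℝ)
                - ⟪a, S (t - s - ε) (S (max r 0) (Q c0') - Q c0')⟫
                + (φ1 ε - φ1 0)| + |φ2 ε - φ2 0| := by
                rw [sub_eq_add_neg]
                exact h1
              linarith
          _ ≤ K1 * ε + M * ‖a‖ * η' + |φ1 ε - φ1 0| + |φ2 ε - φ2 0| := by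
              linarith [bd1, bd2]
      have hBb : ‖∫ r in (0:ℝ)..ε, ((⟪S (max r 0) (Q (adj (t - s - ε) a')), adj s b⟫ : ℝ)
          - ⟪adj (t - s - ε) a, S (max r 0) (Q (adj s b'))⟫)‖ ≤ B * |ε - 0| :=
        intervalIntegral.norm_integral_le_of_norm_le_const hptb
      rw [sub_zero, abs_of_pos hε0] at hBb
      have hBsmall : B < η := by
        rw [hB]
        have hMa : M * ‖a‖ * η' < η / 4 := by
          have he2 : M * ‖a‖ * η' + η' = η / 4 := by
            rw [hη']
            field_simp
          linarith [hη'pos]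
        linarith [hε2, hε3, hε4]
      have hfin : ‖ε⁻¹ * (∫ r in (0:ℝ)..ε,
          ((⟪S (max r 0) (Q (adj (t - s - ε) a')), adj s b⟫ : ℝ)
          - ⟪adj (t - s - ε) a, S (max r 0) (Q (adj s b'))⟫))‖ ≤ B := by
        rw [norm_mul, Real.norm_eq_abs, abs_inv, abs_of_pos hε0]
        rw [Real.norm_eq_abs] at hBb ⊢
        calc ε⁻¹ * |∫ r in (0:ℝ)..ε,
            ((⟪S (max r 0) (Q (adj (t - s - ε) a')), adj s b⟫ : ℝ)
            - ⟪adj (t - s - ε) a, S (max r 0) (Q (adj s b'))⟫)|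
            ≤ ε⁻¹ * (B * ε) := by
              exact mul_le_mul_of_nonneg_left hBb (by positivity)
          _ = B := by field_simp
      exact lt_of_le_of_lt hfin hBsmall
    -- transfer to slope
    rw [hasDerivWithinAt_iff_tendsto_slope,
      show Set.Ici s \ {s} = Set.Ioi s from Ici_sdiff_left]
    have h2'' : Tendsto (fun r : ℝ => r - s) (nhdsWithin s (Set.Ioi s))
        (nhdsWithin 0 (Set.Ioi 0)) := by
      apply tendsto_nhdsWithin_of_tendsto_nhds_of_eventually_within
      · have hsub := (continuous_sub_right s).tendsto s
        rw [sub_self] at hsub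
        exact hsub.mono_left nhdsWithin_le_nhds
      · filter_upwards [eventually_mem_nhdsWithin] with r hr
        simpa [sub_pos] using hr
    refine (T0.comp h2'').congr' ?_
    filter_upwards [eventually_mem_nhdsWithin] with r (hr : r ∈ Set.Ioi s)
    simp only [Function.comp, slope_def_module, smul_eq_mul]
    have hrs : s + (r - s) = r := by ring
    rw [hrs]
  -- conclude
  have hconst := constant_of_has_deriv_right_zero hhcont hderiv t ⟨ht, le_rfl⟩
  have h_t : h t = ⟪S t (Q a), b⟫ := by
    rw [hh]
    simp only []
    rw [sub_self, hadj0]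
    simp only [ContinuousLinearMap.coe_id', id_eq]
    rw [hadj]
    simp only []
    rw [ContinuousLinearMap.adjoint_inner_right]
  have h_0 : h 0 = ⟪a, S t (Q b)⟫ := by
    rw [hh]
    simp only []
    rw [sub_zero, hadj0]
    simp only [ContinuousLinearMap.coe_id', id_eq]
    rw [hadj]
    simp only []
    rw [hQsym, ContinuousLinearMap.adjoint_inner_left]
  rw [← h_t, ← h_0]
  exact hconst

end F

section G
variable (S : ℝ → H →L[ℝ] H)

/-- the domain of the adjoint generator, as a submodule -/
def domA : Submodule ℝ H where
  carrier := {x | ∃ z, adjTo S x z}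
  add_mem' := by
    rintro x₁ x₂ ⟨z₁, h₁⟩ ⟨z₂, h₂⟩
    exact ⟨z₁ + z₂, fun y y' hy => by
      rw [inner_add_right, inner_add_right, h₁ y y' hy, h₂ y y' hy]⟩
  zero_mem' := ⟨0, fun y y' hy => by simp⟩
  smul_mem' := by
    rintro c x ⟨z, hz⟩
    exact ⟨c • z, fun y y' hy => by
      rw [real_inner_smul_right, real_inner_smul_right, hz y y' hy]⟩

variable {S}

theorem exists_adjTo_integral (hS0 : S 0 = 1)
    (hSadd : ∀ s t : ℝ, 0 ≤ s → 0 ≤ t → S (s + t) = (S s).comp (S t))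
    (hScont : ∀ x : H, ContinuousOn (fun t => S t x) (Set.Ici 0))
    (b : H) {δ : ℝ} (hδ : 0 < δ) :
    ∃ x : H, adjTo S x (ContinuousLinearMap.adjoint (S δ) b - b) ∧
      ∀ v : H, (⟪x, v⟫ : ℝ) = ∫ w in (0:ℝ)..δ, ⟪b, S (max w 0) v⟫ := by
  obtain ⟨M, hM1, hMb⟩ := sg_bound hScont δ
  have hMpos : (0:ℝ) < M := lt_of_lt_of_le one_pos hM1
  have hintg : ∀ v : H, IntervalIntegrable (fun w : ℝ => (⟪b, S (max w 0) v⟫ : ℝ))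
      volume 0 δ := fun v => (continuous_const.inner (sg_cont hScont v)).intervalIntegrable 0 δ
  set L : H →ₗ[ℝ] ℝ :=
    { toFun := fun v => ∫ w in (0:ℝ)..δ, (⟪b, S (max w 0) v⟫ : ℝ)
      map_add' := by
        intro v₁ v₂
        rw [← intervalIntegral.integral_add (hintg v₁) (hintg v₂)]
        apply intervalIntegral.integral_congr
        intro w _
        simp [inner_add_right]
      map_smul' := by
        intro c v
        simp only [RingHom.id_apply, smul_eq_mul]
        rw [← intervalIntegral.integral_const_mul]
        apply intervalIntegral.integral_congr
        intro w _
        simp [real_inner_smul_right] } with hL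
  have hLb : ∀ v : H, ‖L v‖ ≤ (M * ‖b‖ * δ) * ‖v‖ := by
    intro v
    have hb1 : ∀ w ∈ Set.uIoc (0:ℝ) δ, ‖(⟪b, S (max w 0) v⟫ : ℝ)‖ ≤ M * ‖b‖ * ‖v‖ := by
      intro w hw
      rw [Set.uIoc_of_le (le_of_lt hδ)] at hw
      rw [Real.norm_eq_abs]
      calc |(⟪b, S (max w 0) v⟫ : ℝ)| ≤ ‖b‖ * ‖S (max w 0) v‖ := abs_real_inner_le_norm _ _
        _ ≤ ‖b‖ * (M * ‖v‖) := by
            refine mul_le_mul_of_nonneg_left ?_ (norm_nonneg b)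
            refine le_trans ((S (max w 0)).le_opNorm v) ?_
            exact mul_le_mul_of_nonneg_right
              (hMb _ (le_max_right _ _) (by rw [max_eq_left (le_of_lt hw.1)]; exact hw.2))
              (norm_nonneg v)
        _ = M * ‖b‖ * ‖v‖ := by ring
    have := intervalIntegral.norm_integral_le_of_norm_le_const hb1
    rw [sub_zero, abs_of_pos hδ] at this
    calc ‖L v‖ ≤ M * ‖b‖ * ‖v‖ * δ := this
      _ = (M * ‖b‖ * δ) * ‖v‖ := by ring
  set Lc : H →L[ℝ] ℝ := L.mkContinuous (M * ‖b‖ * δ) hLb with hLc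
  refine ⟨(InnerProductSpace.toDual ℝ H).symm Lc, ?_, ?_⟩
  · intro y y' hy
    have hip : (⟪(InnerProductSpace.toDual ℝ H).symm Lc, y'⟫ : ℝ) = Lc y' :=
      InnerProductSpace.toDual_symm_apply
    rw [real_inner_comm, hip]
    have hLcv : Lc y' = ∫ w in (0:ℝ)..δ, (⟪b, S (max w 0) y'⟫ : ℝ) := rfl
    rw [hLcv, ← inner_intervalIntegral b ((sg_cont hScont y').intervalIntegrable 0 δ),
      ← sg_ftc hS0 hSadd hScont hy (le_of_lt hδ), inner_sub_right,
      ← ContinuousLinearMap.adjoint_inner_left (S δ) y b, ← inner_sub_left,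
      real_inner_comm]
  · intro v
    have hip : (⟪(InnerProductSpace.toDual ℝ H).symm Lc, v⟫ : ℝ) = Lc v :=
      InnerProductSpace.toDual_symm_apply
    exact hip
    
theorem domA_dense (hS0 : S 0 = 1)
    (hSadd : ∀ s t : ℝ, 0 ≤ s → 0 ≤ t → S (s + t) = (S s).comp (S t))
    (hScont : ∀ x : H, ContinuousOn (fun t => S t x) (Set.Ici 0)) :
    Dense ((domA S : Submodule ℝ H) : Set H) := by
  rw [Submodule.dense_iff_topologicalClosure_eq_top,
    Submodule.topologicalClosure_eq_top_iff]
  rw [Submodule.eq_bot_iff]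
  intro x hx
  rw [Submodule.mem_orthogonal] at hx
  have hzero : ∀ δ : ℝ, 0 < δ → (∫ w in (0:ℝ)..δ, (⟪x, S (max w 0) x⟫ : ℝ)) = 0 := by
    intro δ hδ
    obtain ⟨xδ, hadj, hrep⟩ := exists_adjTo_integral hS0 hSadd hScont x hδ
    have hmem : xδ ∈ domA S := ⟨_, hadj⟩
    have := hx xδ hmem
    rw [← hrep x]
    exact this
  have hgc : Continuous fun w : ℝ => (⟪x, S (max w 0) x⟫ : ℝ) :=
    continuous_const.inner (sg_cont hScont x)
  have hd := slope_right (prim_hasDerivAt hgc 0)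
  have hz : Tendsto (fun ε : ℝ => ε⁻¹ • ((∫ w in (0:ℝ)..(0 + ε), (⟪x, S (max w 0) x⟫ : ℝ))
      - ∫ w in (0:ℝ)..(0:ℝ), (⟪x, S (max w 0) x⟫ : ℝ))) (nhdsWithin 0 (Set.Ioi 0))
      (nhds 0) := by
    apply Tendsto.congr' _ tendsto_const_nhds
    filter_upwards [eventually_mem_nhdsWithin] with ε (hε : ε ∈ Set.Ioi (0:ℝ))
    rw [intervalIntegral.integral_same, zero_add, hzero ε hε]
    simp
  have := tendsto_nhds_unique hd hz
  have hx0 : (⟪x, S (max (0:ℝ) 0) x⟫ : ℝ) = 0 := this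
  rw [max_self, hS0] at hx0
  simp only [ContinuousLinearMap.one_apply] at hx0
  exact inner_self_eq_zero.mp hx0

theorem op_sym (hS0 : S 0 = 1)
    (hSadd : ∀ s t : ℝ, 0 ≤ s → 0 ≤ t → S (s + t) = (S s).comp (S t))
    (hScont : ∀ x : H, ContinuousOn (fun t => S t x) (Set.Ici 0))
    {Q : H →L[ℝ] H} (hQsa : IsSelfAdjoint Q)
    (hAQ : ∀ x z : H, adjTo S x z → genTo S (Q x) (Q z))
    {t : ℝ} (ht : 0 ≤ t) (x : H) :
    Q (ContinuousLinearMap.adjoint (S t) x) = S t (Q x) := by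
  have hQsym : ∀ u v : H, (⟪Q u, v⟫ : ℝ) = ⟪u, Q v⟫ := by
    intro u v
    conv_lhs => rw [← ContinuousLinearMap.isSelfAdjoint_iff'.mp hQsa]
    rw [ContinuousLinearMap.adjoint_inner_left]
  have hdense := domA_dense hS0 hSadd hScont
  have sym_all : ∀ aa bb : H, (⟪S t (Q aa), bb⟫ : ℝ) = ⟪aa, S t (Q bb)⟫ := by
    have step1 : ∀ bb ∈ ((domA S : Submodule ℝ H) : Set H), ∀ aa : H,
        (⟪S t (Q aa), bb⟫ : ℝ) = ⟪aa, S t (Q bb)⟫ := by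
      rintro bb ⟨b', hb'⟩ aa
      have heq : Set.EqOn (fun aa : H => (⟪S t (Q aa), bb⟫ : ℝ))
          (fun aa : H => (⟪aa, S t (Q bb)⟫ : ℝ)) ((domA S : Submodule ℝ H) : Set H) := by
        rintro aa' ⟨a', ha'⟩
        exact sym_dom hS0 hSadd hScont hQsa hAQ ha' hb' ht
      have hf : Continuous fun aa : H => (⟪S t (Q aa), bb⟫ : ℝ) :=
        (((S t).continuous.comp Q.continuous).inner continuous_const)
      have hg : Continuous fun aa : H => (⟪aa, S t (Q bb)⟫ : ℝ) :=
        continuous_id.inner continuous_const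
      have := Continuous.ext_on hdense hf hg heq
      exact congrFun this aa
    intro aa bb
    have heq : Set.EqOn (fun bb : H => (⟪S t (Q aa), bb⟫ : ℝ))
        (fun bb : H => (⟪aa, S t (Q bb)⟫ : ℝ)) ((domA S : Submodule ℝ H) : Set H) :=
      fun bb hbb => step1 bb hbb aa
    have hf : Continuous fun bb : H => (⟪S t (Q aa), bb⟫ : ℝ) :=
      continuous_const.inner continuous_id
    have hg : Continuous fun bb : H => (⟪aa, S t (Q bb)⟫ : ℝ) :=
      continuous_const.inner ((S t).continuous.comp Q.continuous)
    exact congrFun (Continuous.ext_on hdense hf hg heq) bb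
  apply ext_inner_right ℝ
  intro v
  rw [hQsym, ContinuousLinearMap.adjoint_inner_left, sym_all x v]

end G

theorem enn_parseval {ι : Type*} (b : HilbertBasis ι ℝ H) (w : H) :
    (‖w‖₊ : ℝ≥0∞) ^ 2 = ∑' i, (‖(⟪w, b i⟫ : ℝ)‖₊ : ℝ≥0∞) ^ 2 := by
  have hP : HasSum (fun i => (⟪w, b i⟫ : ℝ) * ⟪b i, w⟫) ⟪w, w⟫ :=
    b.hasSum_inner_mul_inner w w
  have hterm : ∀ i, (⟪w, b i⟫ : ℝ) * ⟪b i, w⟫ = ⟪w, b i⟫ * ⟪w, b i⟫ := by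
    intro i
    rw [real_inner_comm (b i) w]
  rw [funext hterm] at hP
  have hnn : ∀ i, (0:ℝ) ≤ (⟪w, b i⟫ : ℝ) * ⟪w, b i⟫ := fun i => mul_self_nonneg _
  have h1 : ENNReal.ofReal (⟪w, w⟫ : ℝ) = ∑' i, ENNReal.ofReal ((⟪w, b i⟫ : ℝ) * ⟪w, b i⟫) := by
    rw [← hP.tsum_eq]
    exact ENNReal.ofReal_tsum_of_nonneg hnn hP.summable
  have h2 : ∀ c : ℝ, ENNReal.ofReal (c * c) = (‖c‖₊ : ℝ≥0∞) ^ 2 := by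
    intro c
    rw [← abs_mul_abs_self c, ← Real.norm_eq_abs,
      ENNReal.ofReal_mul (norm_nonneg c), ofReal_norm, enorm_eq_nnnorm, sq]
  have h3 : ENNReal.ofReal (⟪w, w⟫ : ℝ) = (‖w‖₊ : ℝ≥0∞) ^ 2 := by
    rw [real_inner_self_eq_norm_mul_norm, ENNReal.ofReal_mul (norm_nonneg w),
      ofReal_norm, enorm_eq_nnnorm, sq]
  rw [← h3, h1]
  congr 1
  funext i
  exact h2 _

theorem hs_adjoint {ι : Type*} (b : HilbertBasis ι ℝ H) (T : H →L[ℝ] H) :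
    ∑' i, (‖T (b i)‖₊ : ℝ≥0∞) ^ 2
      = ∑' i, (‖ContinuousLinearMap.adjoint T (b i)‖₊ : ℝ≥0∞) ^ 2 := by
  calc ∑' i, (‖T (b i)‖₊ : ℝ≥0∞) ^ 2
      = ∑' i, ∑' j, (‖(⟪T (b i), b j⟫ : ℝ)‖₊ : ℝ≥0∞) ^ 2 := by
        exact tsum_congr fun i => enn_parseval b (T (b i))
    _ = ∑' j, ∑' i, (‖(⟪T (b i), b j⟫ : ℝ)‖₊ : ℝ≥0∞) ^ 2 := ENNReal.tsum_comm
    _ = ∑' j, ∑' i, (‖(⟪ContinuousLinearMap.adjoint T (b j), b i⟫ : ℝ)‖₊ : ℝ≥0∞) ^ 2 := by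
        refine tsum_congr fun j => tsum_congr fun i => ?_
        rw [← ContinuousLinearMap.adjoint_inner_right, real_inner_comm]
    _ = ∑' j, (‖ContinuousLinearMap.adjoint T (b j)‖₊ : ℝ≥0∞) ^ 2 := by
        exact tsum_congr fun j => (enn_parseval b _).symm


set_option maxHeartbeats 1000000 in
theorem statement8 {ι : Type*}
    (S : ℝ → H →L[ℝ] H)
    (hS0 : S 0 = 1)
    (hSadd : ∀ s t : ℝ, 0 ≤ s → 0 ≤ t → S (s + t) = (S s).comp (S t))
    (hScont : ∀ x : H, ContinuousOn (fun t => S t x) (Set.Ici 0))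
    (Q sqrtQ : H →L[ℝ] H) (hQsa : IsSelfAdjoint Q) (hQnn : ∀ x : H, 0 ≤ ⟪Q x, x⟫)
    (hsqrt_sa : IsSelfAdjoint sqrtQ) (hsqrt_nn : ∀ x : H, 0 ≤ ⟪sqrtQ x, x⟫)
    (hsqrt_sq : sqrtQ.comp sqrtQ = Q)
    -- (e_i) is an orthonormal basis of H
    (e : ι → H) (he : Orthonormal ℝ e)
    (he_tot : Dense ((Submodule.span ℝ (Set.range e) : Submodule ℝ H) : Set H))
    -- Hypothesis H, part 1: ∫₀^∞ Σ_i |Q^{1/2}S(s)*e_i|² ds < ∞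
    (hint : (∫⁻ s in Set.Ioi (0:ℝ),
        ∑' i : ι, (‖sqrtQ (ContinuousLinearMap.adjoint (S s) (e i))‖₊ : ℝ≥0∞) ^ 2) < ⊤)
    -- Hypothesis H, part 2: Q∞ is injective
    (hQinf_inj : Function.Injective (fun x : H =>
      ∫ s in Set.Ioi (0:ℝ), S s (Q (ContinuousLinearMap.adjoint (S s) x))))
    -- for every x ∈ dom(A*): Qx ∈ dom(A) and AQx = QA*x
    (hAQ : ∀ x z : H, adjTo S x z → genTo S (Q x) (Q z)) :
    ∀ t : ℝ, 0 ≤ t → ∀ x : H,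
      ‖sqrtQ (ContinuousLinearMap.adjoint (S t) x)‖ ≤ ‖sqrtQ x‖ := by
  intro t ht x
  -- basic sqrt facts
  have hsqsym : ∀ u v : H, (⟪sqrtQ u, v⟫ : ℝ) = ⟪u, sqrtQ v⟫ := by
    intro u v
    conv_lhs => rw [← ContinuousLinearMap.isSelfAdjoint_iff'.mp hsqrt_sa]
    rw [ContinuousLinearMap.adjoint_inner_left]
  have hsqQ : ∀ v : H, Q v = sqrtQ (sqrtQ v) := by
    intro v
    rw [← hsqrt_sq]
    rfl
  have hQform : ∀ u v : H, (⟪Q u, v⟫ : ℝ) = ⟪sqrtQ u, sqrtQ v⟫ := by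
    intro u v
    rw [hsqQ, hsqsym, ← hsqsym]
  -- the Hilbert basis
  have hsp : ⊤ ≤ (Submodule.span ℝ (Set.range e)).topologicalClosure := by
    rw [Submodule.dense_iff_topologicalClosure_eq_top.mp he_tot]
  set bas : HilbertBasis ι ℝ H := HilbertBasis.mk he hsp with hbas
  have hbe : ∀ i, bas i = e i := fun i => by
    rw [hbas, HilbertBasis.coe_mk]
  -- the function f
  set f : ℝ → ℝ := fun u => ⟪x, S (max (2*u) 0) (Q x)⟫ with hf
  have hfc : Continuous f := by
    rw [hf]
    exact continuous_const.inner
      ((sg_cont hScont (Q x)).comp (continuous_const.mul continuous_id))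
  have hfeq : ∀ u : ℝ, 0 ≤ u →
      f u = ‖sqrtQ (ContinuousLinearMap.adjoint (S u) x)‖ ^ 2 := by
    intro u hu
    rw [hf]
    simp only []
    rw [max_eq_left (by linarith), show 2*u = u + u by ring,
      ← sg_comm hSadd hu hu (Q x),
      show (⟪x, S u (S u (Q x))⟫ : ℝ) = ⟪ContinuousLinearMap.adjoint (S u) x, S u (Q x)⟫ from
        (ContinuousLinearMap.adjoint_inner_left _ _ _).symm,
      ← op_sym hS0 hSadd hScont hQsa hAQ hu x,
      real_inner_comm, hQform, real_inner_self_eq_norm_sq]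
  have hfnn : ∀ u : ℝ, 0 ≤ u → 0 ≤ f u := by
    intro u hu
    rw [hfeq u hu]
    positivity
  -- midpoint inequality
  have hmid : ∀ α β : ℝ, 0 ≤ α → 0 ≤ β → 2 * f ((α + β)/2) ≤ f α + f β := by
    intro α β hα hβ
    have hαβ : (0:ℝ) ≤ (α + β)/2 := by linarith
    have hm : f ((α + β)/2) = ⟪sqrtQ (ContinuousLinearMap.adjoint (S β) x),
        sqrtQ (ContinuousLinearMap.adjoint (S α) x)⟫ := by
      rw [hf]
      simp only []
      rw [max_eq_left (by linarith), show 2*((α+β)/2) = α + β by ring,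
        ← sg_comm hSadd hα hβ (Q x),
        show (⟪x, S α (S β (Q x))⟫ : ℝ)
          = ⟪ContinuousLinearMap.adjoint (S α) x, S β (Q x)⟫ from
          (ContinuousLinearMap.adjoint_inner_left _ _ _).symm,
        ← op_sym hS0 hSadd hScont hQsa hAQ hβ x,
        real_inner_comm, hQform]
    rw [hm, hfeq α hα, hfeq β hβ]
    have hcs := real_inner_le_norm (sqrtQ (ContinuousLinearMap.adjoint (S β) x))
      (sqrtQ (ContinuousLinearMap.adjoint (S α) x))
    nlinarith [sq_nonneg (‖sqrtQ (ContinuousLinearMap.adjoint (S β) x)‖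
      - ‖sqrtQ (ContinuousLinearMap.adjoint (S α) x)‖)]
  -- integral bound
  set W : ℝ → ℝ≥0∞ := fun s =>
    ∑' i : ι, (‖sqrtQ (ContinuousLinearMap.adjoint (S s) (e i))‖₊ : ℝ≥0∞) ^ 2 with hW
  set Itot : ℝ≥0∞ := ∫⁻ s in Set.Ioi (0:ℝ), W s with hItot
  set Lval : ℝ := ((‖x‖₊ : ℝ≥0∞) ^ 2 * Itot).toReal with hLval
  have hItop : (‖x‖₊ : ℝ≥0∞) ^ 2 * Itot ≠ ⊤ :=
    ENNReal.mul_ne_top (by simp [ENNReal.pow_ne_top]) (ne_of_lt hint)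
  have hpt : ∀ s : ℝ, 0 ≤ s → ENNReal.ofReal (f s) ≤ (‖x‖₊ : ℝ≥0∞) ^ 2 * W s := by
    intro s hs
    have h1 : ENNReal.ofReal (f s)
        = (‖sqrtQ (ContinuousLinearMap.adjoint (S s) x)‖₊ : ℝ≥0∞) ^ 2 := by
      rw [hfeq s hs, ← enorm_eq_nnnorm, ← ofReal_norm, ← ENNReal.ofReal_pow (norm_nonneg _)]
    rw [h1, enn_parseval bas (sqrtQ (ContinuousLinearMap.adjoint (S s) x))]
    have h2 : ∀ i : ι, (⟪sqrtQ (ContinuousLinearMap.adjoint (S s) x), bas i⟫ : ℝ)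
        = ⟪x, ((S s).comp sqrtQ) (bas i)⟫ := by
      intro i
      rw [hsqsym, ContinuousLinearMap.adjoint_inner_left]
      rfl
    calc (∑' i : ι, (‖(⟪sqrtQ (ContinuousLinearMap.adjoint (S s) x), bas i⟫ : ℝ)‖₊ : ℝ≥0∞) ^ 2)
        ≤ ∑' i : ι, (‖x‖₊ : ℝ≥0∞) ^ 2 * (‖((S s).comp sqrtQ) (bas i)‖₊ : ℝ≥0∞) ^ 2 := by
          refine ENNReal.tsum_le_tsum fun i => ?_
          rw [h2 i]
          have hle : (‖(⟪x, ((S s).comp sqrtQ) (bas i)⟫ : ℝ)‖₊ : ℝ≥0∞)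
              ≤ (‖x‖₊ : ℝ≥0∞) * (‖((S s).comp sqrtQ) (bas i)‖₊ : ℝ≥0∞) := by
            rw [← ENNReal.coe_mul]
            exact_mod_cast nnnorm_inner_le_nnnorm (𝕜 := ℝ) x (((S s).comp sqrtQ) (bas i))
          calc ((‖(⟪x, ((S s).comp sqrtQ) (bas i)⟫ : ℝ)‖₊ : ℝ≥0∞)) ^ 2
              ≤ ((‖x‖₊ : ℝ≥0∞) * (‖((S s).comp sqrtQ) (bas i)‖₊ : ℝ≥0∞)) ^ 2 := by
                gcongr
            _ = (‖x‖₊ : ℝ≥0∞) ^ 2 * (‖((S s).comp sqrtQ) (bas i)‖₊ : ℝ≥0∞) ^ 2 := by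
                rw [mul_pow]
      _ = (‖x‖₊ : ℝ≥0∞) ^ 2 * ∑' i : ι, (‖((S s).comp sqrtQ) (bas i)‖₊ : ℝ≥0∞) ^ 2 := by
          rw [ENNReal.tsum_mul_left]
      _ = (‖x‖₊ : ℝ≥0∞) ^ 2 * W s := by
          congr 1
          rw [hs_adjoint bas ((S s).comp sqrtQ)]
          simp only [hW]
          refine tsum_congr fun i => ?_
          have hadc : ContinuousLinearMap.adjoint ((S s).comp sqrtQ) (bas i)
              = sqrtQ (ContinuousLinearMap.adjoint (S s) (bas i)) := by
            rw [ContinuousLinearMap.adjoint_comp,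
              ContinuousLinearMap.isSelfAdjoint_iff'.mp hsqrt_sa]
            rfl
          rw [hadc, hbe i]
  have hIbd : ∀ α β : ℝ, 0 ≤ α → α ≤ β → (∫ u in α..β, f u) ≤ Lval := by
    intro α β hα hαβ
    rw [intervalIntegral.integral_of_le hαβ]
    have hae : 0 ≤ᵐ[volume.restrict (Set.Ioc α β)] f :=
      ae_restrict_of_forall_mem measurableSet_Ioc
        (fun u hu => hfnn u (le_of_lt (lt_of_le_of_lt hα hu.1)))
    rw [integral_eq_lintegral_of_nonneg_ae hae hfc.aestronglyMeasurable.restrict]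
    refine ENNReal.toReal_mono hItop ?_
    · 
      calc (∫⁻ u in Set.Ioc α β, ENNReal.ofReal (f u))
          ≤ ∫⁻ u in Set.Ioc α β, (‖x‖₊ : ℝ≥0∞) ^ 2 * W u := by
            refine lintegral_mono_ae (ae_restrict_of_forall_mem measurableSet_Ioc
              (fun u hu => hpt u (le_of_lt (lt_of_le_of_lt hα hu.1))))
        _ = (‖x‖₊ : ℝ≥0∞) ^ 2 * ∫⁻ u in Set.Ioc α β, W u := by
            rw [lintegral_const_mul' _ _ (by simp [ENNReal.pow_ne_top])]
        _ ≤ (‖x‖₊ : ℝ≥0∞) ^ 2 * Itot := by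
            refine mul_le_mul_right ?_ _
            rw [hItot]
            refine lintegral_mono_set fun u hu => lt_of_le_of_lt hα hu.1
  -- main contradiction argument
  by_contra hgt
  push_neg at hgt
  have htpos : 0 < t := by
    rcases eq_or_lt_of_le ht with rfl | h
    · rw [hS0] at hgt
      simp only [ContinuousLinearMap.one_def, ContinuousLinearMap.adjoint_id,
        ContinuousLinearMap.coe_id', id_eq] at hgt
      exact absurd hgt (lt_irrefl _)
    · exact h
  have hf0 : f 0 = ‖sqrtQ x‖ ^ 2 := by
    rw [hfeq 0 le_rfl, hS0]
    simp [ContinuousLinearMap.one_def, ContinuousLinearMap.adjoint_id]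
  have hft : f t = ‖sqrtQ (ContinuousLinearMap.adjoint (S t) x)‖ ^ 2 := hfeq t ht
  set d : ℝ := f t - f 0 with hd
  have hdpos : 0 < d := by
    rw [hd, hf0, hft]
    have := pow_lt_pow_left₀ hgt (norm_nonneg _) (by norm_num : 2 ≠ 0)
    linarith
  have hstep : ∀ k : ℕ, d ≤ f ((k+1 : ℕ) * t) - f ((k : ℕ) * t) := by
    intro k
    induction k with
    | zero => simp [hd]
    | succ n ih =>
      have hkey := hmid ((n:ℝ) * t) (((n:ℕ)+2 : ℝ) * t) (by positivity)
        (by positivity)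
      have harg : (((n:ℝ) * t) + (((n:ℕ)+2 : ℝ) * t))/2 = ((n+1 : ℕ) : ℝ) * t := by
        push_cast
        ring
      rw [harg] at hkey
      have h2 : (((n:ℕ)+2 : ℝ) * t) = ((n+1+1 : ℕ) : ℝ) * t := by push_cast; ring
      rw [h2] at hkey
      push_cast at hkey ih ⊢
      linarith
  have hlow : ∀ k : ℕ, f 0 + k * d ≤ f ((k:ℝ) * t) := by
    intro k
    induction k with
    | zero => simp
    | succ n ih =>
      have := hstep n
      push_cast at this ih ⊢
      linarith
  have hupper : ∀ k : ℕ, 1 ≤ k → t * (2 * f ((k:ℝ)*t)) ≤ 2 * Lval := by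
    intro k hk
    have hkt : t ≤ (k:ℝ) * t := by
      have h1k : (1:ℝ) ≤ (k:ℝ) := by exact_mod_cast hk
      nlinarith
    have hktnn : (0:ℝ) ≤ (k:ℝ)*t := by positivity
    have hintg1 : IntervalIntegrable (fun δ : ℝ => f ((k:ℝ)*t - δ)) volume 0 t :=
      (hfc.comp (continuous_const.sub continuous_id)).intervalIntegrable 0 t
    have hintg2 : IntervalIntegrable (fun δ : ℝ => f ((k:ℝ)*t + δ)) volume 0 t :=
      (hfc.comp (continuous_const.add continuous_id)).intervalIntegrable 0 t
    have hmono : (∫ δ in (0:ℝ)..t, (2 * f ((k:ℝ)*t)))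
        ≤ ∫ δ in (0:ℝ)..t, (f ((k:ℝ)*t - δ) + f ((k:ℝ)*t + δ)) := by
      refine intervalIntegral.integral_mono_on ht
        (intervalIntegrable_const) (hintg1.add hintg2) ?_
      intro δ hδ
      have h1 : (0:ℝ) ≤ (k:ℝ)*t - δ := by linarith [hδ.2, hkt]
      have h2 : (0:ℝ) ≤ (k:ℝ)*t + δ := by linarith [hδ.1]
      have := hmid ((k:ℝ)*t - δ) ((k:ℝ)*t + δ) h1 h2
      have harg : (((k:ℝ)*t - δ) + ((k:ℝ)*t + δ))/2 = (k:ℝ)*t := by ring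
      rw [harg] at this
      linarith
    rw [intervalIntegral.integral_const, smul_eq_mul, sub_zero] at hmono
    have hsplit : (∫ δ in (0:ℝ)..t, (f ((k:ℝ)*t - δ) + f ((k:ℝ)*t + δ)))
        = (∫ u in ((k:ℝ)*t - t)..((k:ℝ)*t), f u) + ∫ u in ((k:ℝ)*t)..((k:ℝ)*t + t), f u := by
      rw [intervalIntegral.integral_add hintg1 hintg2]
      congr 1
      · have := intervalIntegral.integral_comp_sub_left (a := (0:ℝ)) (b := t) f ((k:ℝ)*t)
        rw [this, sub_zero]
      · have := intervalIntegral.integral_comp_add_left (a := (0:ℝ)) (b := t) f ((k:ℝ)*t)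
        rw [this, add_zero]
    have hb1 : (∫ u in ((k:ℝ)*t - t)..((k:ℝ)*t), f u) ≤ Lval :=
      hIbd _ _ (by linarith [hkt]) (by linarith [htpos])
    have hb2 : (∫ u in ((k:ℝ)*t)..((k:ℝ)*t + t), f u) ≤ Lval :=
      hIbd _ _ hktnn (by linarith [htpos])
    calc t * (2 * f ((k:ℝ)*t)) ≤ _ := hmono
      _ = _ := hsplit
      _ ≤ 2 * Lval := by linarith
  -- choose k large
  obtain ⟨k, hkgt⟩ := exists_nat_gt (max ((Lval / t - f 0)/d) 1)
  have hk1 : 1 ≤ k := by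
    have := lt_of_le_of_lt (le_max_right _ _) hkgt
    exact_mod_cast this.le
  have hkd : Lval / t - f 0 < k * d := by
    have h1 : (Lval / t - f 0)/d < k := lt_of_le_of_lt (le_max_left _ _) hkgt
    rwa [div_lt_iff₀ hdpos] at h1
  have hfkt : f ((k:ℝ)*t) ≤ Lval / t := by
    have := hupper k hk1
    rw [le_div_iff₀ htpos]
    nlinarith
  have hl := hlow k
  have hcomb : f 0 + (k:ℝ) * d ≤ Lval / t := le_trans hl hfkt
  linarith [hkd, hcomb]
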